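/- Let β be a mixed base with β_0 ≥ 2, β_L = 2 for L ≥ 1, and m = 2. For the cyclic-Nimhoff function φ(x,y) = β_0·(⌊x/β_0⌋ XOR ⌊y/β_0⌋) + ((x + y) mod β_0), we have φ(x,y) = x ⊕_β y where ⊕_β is digit-wise addition modulo β_L in mixed base β. -/

import Mathlib

open scoped BigOperators

/-- β̂_L = β_0 ⋯ β_{L-1}, the place value of digit L in mixed base β. -/
def bhat (β : ℕ → ℕ) (L : ℕ) : ℕ := ∏ i ∈ Finset.range L, β i

/-- The L-th digit of n in the mixed base β. -/
def mdigit (β : ℕ → ℕ) (n L : ℕ) : ℕ := n / bhat β L % β L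

/-- Digit-wise addition modulo β_L in mixed base β. -/
def moplus (β : ℕ → ℕ) (n h : ℕ) : ℕ :=
  ∑ L ∈ Finset.range (n + h + 1), ((mdigit β n L + mdigit β h L) % β L) * bhat β L

/-- Digit-wise subtraction modulo β_L in mixed base β. -/
def mominus (β : ℕ → ℕ) (n h : ℕ) : ℕ :=
  ∑ L ∈ Finset.range (n + h + 1), ((β L + mdigit β n L - mdigit β h L) % β L) * bhat β L

/-- σ_β(X) = x^0 ⊕ ⋯ ⊕ x^{m-1}: the digit-wise Nim sum in mixed base β. -/
def msigma (β : ℕ → ℕ) {m : ℕ} (X : Fin m → ℕ) : ℕ :=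
  ∑ L ∈ Finset.range (∑ i, X i + 1), ((∑ i, mdigit β (X i) L) % β L) * bhat β L

/-- Hamming weight: number of nonzero components. -/
def hamwt {m : ℕ} (C : Fin m → ℕ) : ℕ := (Finset.univ.filter (fun i => C i ≠ 0)).card

/-- ord_β(n): the largest L with β̂_L ∣ n (⊤ for n = 0). -/
def mord (β : ℕ → ℕ) (n : ℕ) : ℕ∞ :=
  if n = 0 then ⊤ else (Nat.findGreatest (fun L => bhat β L ∣ n) n : ℕ∞)

/-- 𝒞 is a Sprague-Grundy system of σ_β: its members are nonzero moves and
σ_β satisfies the mex recursion of the take-away game Γ(ℕ^m, 𝒞), i.e. σ_β is the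
Sprague-Grundy function of that game. -/
def IsSGSystem (β : ℕ → ℕ) {m : ℕ} (𝒞 : Set (Fin m → ℕ)) : Prop :=
  (∀ C ∈ 𝒞, C ≠ 0) ∧
  ∀ X : Fin m → ℕ, msigma β X =
    sInf {n : ℕ | ∀ C ∈ 𝒞, (∀ i, C i ≤ X i) → msigma β (fun i => X i - C i) ≠ n}

/-- For β = (β₀, 2, 2, …), the cyclic-Nimhoff value
β₀·(⌊x/β₀⌋ XOR ⌊y/β₀⌋) + ((x+y) mod β₀) equals the mixed-base Nim sum x ⊕_β y. -/
lemma sum_bits (N : ℕ) : ∀ n, n < 2^N → ∑ k ∈ Finset.range N, n / 2^k % 2 * 2^k = n := by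
  induction N with
  | zero => intro n h; interval_cases n; simp
  | succ N ih =>
    intro n h
    rw [Finset.sum_range_succ']
    have h2 : n / 2 < 2^N := by
      rw [Nat.div_lt_iff_lt_mul (by norm_num)]
      calc n < 2^(N+1) := h
      _ = 2^N * 2 := by ring
    have := ih (n / 2) h2
    have key : ∀ k, n / 2^(k+1) % 2 * 2^(k+1) = (n / 2 / 2^k % 2 * 2^k) * 2 := by
      intro k
      rw [pow_succ, ← Nat.div_div_eq_div_mul, Nat.div_div_eq_div_mul]
      ring_nf
      rw [Nat.div_div_eq_div_mul]
      ring_nf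
    calc ∑ k ∈ Finset.range N, n / 2^(k+1) % 2 * 2^(k+1) + n / 2^0 % 2 * 2^0
        = (∑ k ∈ Finset.range N, n / 2 / 2^k % 2 * 2^k) * 2 + n % 2 := by
          rw [Finset.sum_mul]; simp [key]
      _ = n / 2 * 2 + n % 2 := by rw [this]
      _ = n := by omega

lemma xor_bit (a b k : ℕ) : (a / 2^k % 2 + b / 2^k % 2) % 2 = (a ^^^ b) / 2^k % 2 := by
  have ta := Nat.testBit_eq_decide_div_mod_eq (x := a) (i := k)
  have tb := Nat.testBit_eq_decide_div_mod_eq (x := b) (i := k)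
  have tc := Nat.testBit_eq_decide_div_mod_eq (x := a ^^^ b) (i := k)
  have hx : (a ^^^ b).testBit k = ((a.testBit k) != (b.testBit k)) := Nat.testBit_xor a b k
  have ha : a / 2^k % 2 = 0 ∨ a / 2^k % 2 = 1 := by omega
  have hb : b / 2^k % 2 = 0 ∨ b / 2^k % 2 = 1 := by omega
  have hc : (a ^^^ b) / 2^k % 2 = 0 ∨ (a ^^^ b) / 2^k % 2 = 1 := by omega
  rcases ha with ha | ha <;> rcases hb with hb | hb <;>
    simp_all [Nat.testBit_eq_decide_div_mod_eq] <;> omega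

theorem stmt18 (β : ℕ → ℕ) (hβ0 : 2 ≤ β 0) (hβ : ∀ L, 1 ≤ L → β L = 2)
    (x y : ℕ) :
    β 0 * ((x / β 0) ^^^ (y / β 0)) + (x + y) % β 0 = moplus β x y := by
  have hb1 : bhat β 0 = 1 := by simp [bhat]
  have hbhat : ∀ k, bhat β (k+1) = β 0 * 2^k := by
    intro k
    induction k with
    | zero => simp [bhat]
    | succ k ih =>
      have : bhat β (k+2) = bhat β (k+1) * β (k+1) := by
        simp [bhat, Finset.prod_range_succ]
      rw [this, ih, hβ (k+1) (by omega)]; ring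
  have hdig : ∀ n k, mdigit β n (k+1) = n / β 0 / 2^k % 2 := by
    intro n k
    rw [mdigit, hbhat, hβ (k+1) (by omega), Nat.div_div_eq_div_mul]
  rw [moplus, Finset.sum_range_succ']
  have h0 : (mdigit β x 0 + mdigit β y 0) % β 0 * bhat β 0 = (x + y) % β 0 := by
    simp [mdigit, hb1, Nat.add_mod]
  rw [h0]
  have hterm : ∀ k, (mdigit β x (k+1) + mdigit β y (k+1)) % β (k+1) * bhat β (k+1)
      = β 0 * ((x / β 0 ^^^ y / β 0) / 2^k % 2 * 2^k) := by
    intro k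
    rw [hdig, hdig, hβ (k+1) (by omega), hbhat, xor_bit]
    ring
  simp only [hterm, ← Finset.mul_sum]
  congr 1
  rw [sum_bits]
  have hx : x / β 0 < 2^(x+y) :=
    lt_of_le_of_lt (Nat.div_le_self _ _) (lt_of_le_of_lt (Nat.le_add_right x y) Nat.lt_two_pow_self)
  have hy : y / β 0 < 2^(x+y) :=
    lt_of_le_of_lt (Nat.div_le_self _ _) (lt_of_le_of_lt (Nat.le_add_left y x) Nat.lt_two_pow_self)
  exact Nat.xor_lt_two_pow hx hy
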